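/- Given a, b, α > 0, there exist constants C > 0 and μ* > 0, depending only on a, b, α, such that for every μ > μ* and every t ≥ 0, ∫_0^t exp(-μ(t-s)) (b + a s)^{-α} ds ≤ (C/μ) (b + a t)^{-α}. -/

import Mathlib

open Real MeasureTheory intervalIntegral

/-- Weighted exponential convolution estimate for algebraically decaying weights. -/
theorem exp_conv_algebraic_decay (a b α : ℝ) (ha : 0 < a) (hb : 0 < b) (hα : 0 < α) :
    ∃ C > (0 : ℝ), ∃ μstar > (0 : ℝ), ∀ μ > μstar, ∀ t ≥ (0 : ℝ),
      (∫ s in (0 : ℝ)..t, Real.exp (-μ * (t - s)) * (b + a * s) ^ (-α))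
        ≤ C / μ * (b + a * t) ^ (-α) := by
  refine ⟨2, by norm_num, 4 * α * a / b, by positivity, ?_⟩
  intro μ hμ t ht
  have hμ0 : 0 < μ := lt_trans (by positivity) hμ
  set h : ℝ → ℝ := fun s => Real.exp (μ * s) * (b + a * s) ^ (-α) with hh
  set d : ℝ → ℝ := fun s =>
    μ * Real.exp (μ * s) * (b + a * s) ^ (-α)
      + Real.exp (μ * s) * (a * (-α) * (b + a * s) ^ (-α - 1)) with hd
  have hpos : ∀ s ∈ Set.Icc (0:ℝ) t, 0 < b + a * s := by
    intro s hs; nlinarith [hs.1]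
  have hIcc : Set.uIcc (0:ℝ) t = Set.Icc 0 t := Set.uIcc_of_le ht
  -- derivative
  have hderiv : ∀ s ∈ Set.uIcc (0:ℝ) t, HasDerivAt h (d s) s := by
    rw [hIcc]
    intro s hs
    have h1 : HasDerivAt (fun s => Real.exp (μ * s)) (μ * Real.exp (μ * s)) s := by
      have := (Real.hasDerivAt_exp (μ * s)).comp s ((hasDerivAt_id s).const_mul μ)
      simpa [mul_comm, Function.comp_def] using this
    have h2 : HasDerivAt (fun s => b + a * s) a s := by
      simpa using ((hasDerivAt_id s).const_mul a).const_add b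
    have h3 : HasDerivAt (fun s => (b + a * s) ^ (-α)) (a * (-α) * (b + a * s) ^ (-α - 1)) s :=
      h2.rpow_const (Or.inl (ne_of_gt (hpos s hs)))
    simpa [hd, hh, mul_comm, mul_assoc, mul_left_comm, Pi.mul_def] using h1.mul h3
  -- continuity / integrability
  have hcb : ContinuousOn (fun s : ℝ => b + a * s) (Set.Icc 0 t) := by fun_prop
  have hcW : ∀ p : ℝ, ContinuousOn (fun s : ℝ => (b + a * s) ^ p) (Set.Icc 0 t) := by
    intro p
    exact hcb.rpow_const (fun s hs => Or.inl (ne_of_gt (hpos s hs)))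
  have hch : ContinuousOn h (Set.Icc 0 t) := by
    exact (Real.continuous_exp.comp (continuous_const.mul continuous_id)).continuousOn.mul
      (hcW (-α))
  have hcd : ContinuousOn d (Set.Icc 0 t) := by
    have hce : ContinuousOn (fun s : ℝ => Real.exp (μ * s)) (Set.Icc 0 t) :=
      (Real.continuous_exp.comp (continuous_const.mul continuous_id)).continuousOn
    exact ((continuousOn_const.mul hce).mul (hcW (-α))).add
      (hce.mul (continuousOn_const.mul (hcW (-α - 1))))
  have hIh : IntervalIntegrable h volume 0 t := by
    apply ContinuousOn.intervalIntegrable; rwa [hIcc]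
  have hId : IntervalIntegrable d volume 0 t := by
    apply ContinuousOn.intervalIntegrable; rwa [hIcc]
  -- FTC
  have hftc : (∫ s in (0:ℝ)..t, d s) = h t - h 0 :=
    intervalIntegral.integral_eq_sub_of_hasDerivAt hderiv hId
  -- pointwise inequality μ/2 * h ≤ d
  have hpt : ∀ s ∈ Set.Icc (0:ℝ) t, μ / 2 * h s ≤ d s := by
    intro s hs
    have hx : 0 < b + a * s := hpos s hs
    have hE : 0 < Real.exp (μ * s) := Real.exp_pos _
    have hW : 0 < (b + a * s) ^ (-α) := Real.rpow_pos_of_pos hx _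
    have hsplit : (b + a * s) ^ (-α - 1) = (b + a * s) ^ (-α) / (b + a * s) := by
      rw [Real.rpow_sub hx, Real.rpow_one]
    have key : a * α / (b + a * s) ≤ μ / 2 := by
      have h1 : a * α / (b + a * s) ≤ a * α / b :=
        div_le_div_of_nonneg_left (by positivity) hb (by nlinarith [hs.1])
      have h2 : 4 * α * a / b < μ := hμ
      have h3 : a * α / b = (4 * α * a / b) / 4 := by ring
      linarith [h3 ▸ h1]
    have key2 : Real.exp (μ * s) * (b + a * s) ^ (-α) * (a * α / (b + a * s))
        ≤ Real.exp (μ * s) * (b + a * s) ^ (-α) * (μ / 2) :=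
      mul_le_mul_of_nonneg_left key (by positivity)
    simp only [hh, hd, hsplit]
    ring_nf at key2 ⊢
    linarith [key2]
  -- integrate
  have hmono : (∫ s in (0:ℝ)..t, μ / 2 * h s) ≤ ∫ s in (0:ℝ)..t, d s :=
    intervalIntegral.integral_mono_on ht (hIh.const_mul _) hId hpt
  rw [intervalIntegral.integral_const_mul, hftc] at hmono
  have hh0 : 0 < h 0 := by
    simp only [hh]
    positivity
  have hI : (∫ s in (0:ℝ)..t, h s) ≤ 2 / μ * h t := by
    rw [div_mul_eq_mul_div, le_div_iff₀ hμ0]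
    nlinarith
  -- rewrite the LHS
  have hLHS : (∫ s in (0:ℝ)..t, Real.exp (-μ * (t - s)) * (b + a * s) ^ (-α))
      = Real.exp (-μ * t) * ∫ s in (0:ℝ)..t, h s := by
    rw [← intervalIntegral.integral_const_mul]
    apply intervalIntegral.integral_congr
    intro s _
    simp only [hh, ← mul_assoc, ← Real.exp_add]
    ring_nf
  rw [hLHS]
  have : Real.exp (-μ * t) * (∫ s in (0:ℝ)..t, h s) ≤ Real.exp (-μ * t) * (2 / μ * h t) :=
    mul_le_mul_of_nonneg_left hI (le_of_lt (Real.exp_pos _))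
  refine le_trans this (le_of_eq ?_)
  simp only [hh]
  rw [show Real.exp (-μ * t) * (2 / μ * (Real.exp (μ * t) * (b + a * t) ^ (-α)))
      = Real.exp (-μ * t) * Real.exp (μ * t) * (2 / μ * (b + a * t) ^ (-α)) by ring,
    ← Real.exp_add]
  ring_nf
  simp
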